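/- (Quantitative Schmidt–Sprindžuk lemma, Theorem 1.4, estimate (1.1).) Let (X, μ) be a probability space and (B_n)_{n≥1} measurable subsets of X with ∑_{n=1}^∞ μ(B_n) = ∞, and suppose there exists C > 0 such that ∑_{m,n=M}^N ( μ(B_m ∩ B_n) − μ(B_m)μ(B_n) ) ≤ C·∑_{n=M}^N μ(B_n) for all integers 1 ≤ M ≤ N. Then for every ε > 0 and for μ-almost every x ∈ X there exists a constant K = K(x, ε) > 0 such that |S_N(x) − E_N| ≤ K·E_N^{1/2}·(log E_N)^{3/2+ε} for all N with E_N ≥ 2, where S_N(x) = #{1 ≤ n ≤ N : x ∈ B_n} and E_N = ∑_{n=1}^N μ(B_n). -/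

import Mathlib

open MeasureTheory Filter
open scoped Classical

private lemma ss_var {X : Type*} [MeasurableSpace X] (μ : Measure X) [IsProbabilityMeasure μ]
    (B : ℕ → Set X) (hB : ∀ n, MeasurableSet (B n)) (S : Finset ℕ) :
    Integrable (fun x => (∑ n ∈ S, ((B n).indicator (fun _ => (1:ℝ)) x - (μ (B n)).toReal))^2) μ ∧
    ∫ x, (∑ n ∈ S, ((B n).indicator (fun _ => (1:ℝ)) x - (μ (B n)).toReal))^2 ∂μ
      = ∑ m ∈ S, ∑ n ∈ S, ((μ (B m ∩ B n)).toReal - (μ (B m)).toReal * (μ (B n)).toReal) := by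
  set e : ℕ → ℝ := fun n => (μ (B n)).toReal with he
  set I : Set X → X → ℝ := fun s x => s.indicator (fun _ => (1:ℝ)) x with hI
  have hIint : ∀ s : Set X, MeasurableSet s → Integrable (fun x => I s x) μ := fun s hs =>
    (integrable_const (1:ℝ)).indicator hs
  have hIval : ∀ s : Set X, MeasurableSet s → ∫ x, I s x ∂μ = (μ s).toReal := by
    intro s hs; simpa [measureReal_def] using integral_indicator_const (1:ℝ) hs
  have hprod : ∀ m n, (fun x => (I (B m) x - e m) * (I (B n) x - e n))
      = fun x => I (B m ∩ B n) x - e m * I (B n) x - e n * I (B m) x + e m * e n := by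
    intro m n; funext x
    have h1 : I (B m) x * I (B n) x = I (B m ∩ B n) x := by
      by_cases hm : x ∈ B m <;> by_cases hn : x ∈ B n <;>
        simp [hI, Set.indicator, hm, hn, Set.mem_inter_iff]
    have h2 : (I (B m) x - e m) * (I (B n) x - e n)
        = I (B m) x * I (B n) x - e m * I (B n) x - e n * I (B m) x + e m * e n := by ring
    rw [h2, h1]
  have hint : ∀ m n, Integrable (fun x => (I (B m) x - e m) * (I (B n) x - e n)) μ := by
    intro m n; rw [hprod]
    have i1 := hIint _ ((hB m).inter (hB n))
    have i2 := (hIint _ (hB n)).const_mul (e m)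
    have i3 := (hIint _ (hB m)).const_mul (e n)
    exact ((i1.sub i2).sub i3).add (integrable_const _)
  have hval : ∀ m n, ∫ x, (I (B m) x - e m) * (I (B n) x - e n) ∂μ
      = (μ (B m ∩ B n)).toReal - e m * e n := by
    intro m n; rw [hprod]
    have i1 := hIint _ ((hB m).inter (hB n))
    have i2 := (hIint _ (hB n)).const_mul (e m)
    have i3 := (hIint _ (hB m)).const_mul (e n)
    have j2 : Integrable (fun x => I (B m ∩ B n) x - e m * I (B n) x) μ := i1.sub i2
    have j1 : Integrable (fun x => I (B m ∩ B n) x - e m * I (B n) x - e n * I (B m) x) μ :=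
      j2.sub i3
    rw [integral_add j1 (integrable_const _),
      integral_sub j2 i3, integral_sub i1 i2,
      integral_const_mul, integral_const_mul,
      hIval _ ((hB m).inter (hB n)), hIval _ (hB n), hIval _ (hB m), integral_const]
    simp only [measure_univ, ENNReal.toReal_one, probReal_univ, smul_eq_mul, one_mul]
    ring
  have hsq : (fun x => (∑ n ∈ S, (I (B n) x - e n))^2)
      = fun x => ∑ m ∈ S, ∑ n ∈ S, (I (B m) x - e m) * (I (B n) x - e n) := by
    funext x; rw [sq, Finset.sum_mul_sum]
  constructor
  · show Integrable (fun x => (∑ n ∈ S, (I (B n) x - e n))^2) μ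
    rw [hsq]
    exact integrable_finset_sum _ fun m _ => integrable_finset_sum _ fun n _ => hint m n
  · show ∫ x, (∑ n ∈ S, (I (B n) x - e n))^2 ∂μ = _
    rw [hsq, integral_finset_sum _ (fun m _ => integrable_finset_sum _ fun n _ => hint m n)]
    refine Finset.sum_congr rfl fun m _ => ?_
    rw [integral_finset_sum _ fun n _ => hint m n]
    exact Finset.sum_congr rfl fun n _ => hval m n


set_option maxHeartbeats 1000000 in
/-- **Quantitative Schmidt–Sprindžuk lemma (Theorem 1.4, estimate (1.1)).**
Under condition (SP) with divergent sum of measures, for every `ε > 0` and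
a.e. `x` there is `K = K(x, ε) > 0` such that
`|S_N(x) − E_N| ≤ K·E_N^{1/2}·(log E_N)^{3/2+ε}` for all `N` with `E_N ≥ 2`. -/
theorem schmidt_sprindzuk_quantitative
    {X : Type*} [MeasurableSpace X] (μ : Measure X) [IsProbabilityMeasure μ]
    (B : ℕ → Set X) (hBmeas : ∀ n, MeasurableSet (B n))
    (hdiv : Tendsto (fun N : ℕ => ∑ n ∈ Finset.Icc 1 N, (μ (B n)).toReal) atTop atTop)
    (C : ℝ) (hC : 0 < C)
    (hSP : ∀ M N : ℕ, 1 ≤ M → M ≤ N →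
      ∑ m ∈ Finset.Icc M N, ∑ n ∈ Finset.Icc M N,
        ((μ (B m ∩ B n)).toReal - (μ (B m)).toReal * (μ (B n)).toReal)
      ≤ C * ∑ n ∈ Finset.Icc M N, (μ (B n)).toReal) :
    ∀ ε : ℝ, 0 < ε →
      ∀ᵐ x ∂μ, ∃ K : ℝ, 0 < K ∧
        ∀ N : ℕ, 2 ≤ ∑ n ∈ Finset.Icc 1 N, (μ (B n)).toReal →
          |(((Finset.Icc 1 N).filter (fun n => x ∈ B n)).card : ℝ) -
              ∑ n ∈ Finset.Icc 1 N, (μ (B n)).toReal| ≤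
            K * (∑ n ∈ Finset.Icc 1 N, (μ (B n)).toReal) ^ ((1 : ℝ) / 2) *
              (Real.log (∑ n ∈ Finset.Icc 1 N, (μ (B n)).toReal)) ^ ((3 : ℝ) / 2 + ε) := by
  intro ε hε
  set e : ℕ → ℝ := fun n => (μ (B n)).toReal with he
  set E : ℕ → ℝ := fun N => ∑ n ∈ Finset.Ioc 0 N, e n with hE
  have hIccIoc : ∀ N, Finset.Icc 1 N = Finset.Ioc 0 N := fun N => Finset.Icc_add_one_left_eq_Ioc 0 N
  have he0 : ∀ n, 0 ≤ e n := fun n => ENNReal.toReal_nonneg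
  have he1 : ∀ n, e n ≤ 1 := by
    intro n
    have h := prob_le_one (μ := μ) (s := B n)
    simpa using ENNReal.toReal_mono (by simp) h
  have hE0 : ∀ N, 0 ≤ E N := fun N => Finset.sum_nonneg fun n _ => he0 n
  have hEmono : Monotone E := by
    intro a b hab
    exact Finset.sum_le_sum_of_subset_of_nonneg
      (Finset.Ioc_subset_Ioc le_rfl hab) (fun n _ _ => he0 n)
  have hEdiff : ∀ a b : ℕ, a ≤ b → E b - E a = ∑ n ∈ Finset.Ioc a b, e n := by
    intro a b hab
    show (∑ n ∈ Finset.Ioc 0 b, e n) - ∑ n ∈ Finset.Ioc 0 a, e n = _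
    rw [← Finset.sum_Ioc_consecutive e (Nat.zero_le a) hab]
    ring
  have hex : ∀ t : ℝ, ∃ N, t ≤ E N := by
    intro t
    have hdiv' : Tendsto E atTop atTop := by
      refine hdiv.congr fun N => ?_
      rw [hIccIoc]
    exact (hdiv'.eventually_ge_atTop t).exists
  set tau : ℝ → ℕ := fun t => Nat.find (hex t) with htaudef
  have htau_le : ∀ t, t ≤ E (tau t) := fun t => Nat.find_spec (hex t)
  have htau_iff : ∀ t N, tau t ≤ N ↔ t ≤ E N := by
    intro t N
    constructor
    · intro h; exact le_trans (htau_le t) (hEmono h)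
    · intro h; exact Nat.find_le h
  have htau_mono : ∀ s t : ℝ, s ≤ t → tau s ≤ tau t := by
    intro s t hst
    exact (htau_iff s (tau t)).2 (hst.trans (htau_le t))
  have htau_ub : ∀ t : ℝ, 0 ≤ t → E (tau t) ≤ t + 1 := by
    intro t ht
    cases h : tau t with
    | zero =>
        have : E 0 = 0 := by simp [hE]
        rw [this]; linarith
    | succ M =>
        have h' : Nat.find (hex t) = M + 1 := h
        have hM : ¬ t ≤ E M := Nat.find_min (hex t) (by omega)
        have hstep : E (M+1) = E M + e (M+1) := by
          show (∑ n ∈ Finset.Ioc 0 (M+1), e n) = (∑ n ∈ Finset.Ioc 0 M, e n) + e (M+1)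
          exact Finset.sum_Ioc_succ_top (Nat.zero_le M) e
        have := he1 (M+1)
        rw [hstep]
        push_neg at hM
        linarith
  -- variance estimate
  have hvar : ∀ a b : ℕ, a ≤ b →
      ∫ x, (∑ n ∈ Finset.Ioc a b, ((B n).indicator (fun _ => (1:ℝ)) x - e n))^2 ∂μ
        ≤ C * (E b - E a) := by
    intro a b hab
    rw [(ss_var μ B hBmeas (Finset.Ioc a b)).2, hEdiff a b hab]
    rcases eq_or_lt_of_le hab with heq | hlt
    · subst heq; simp
    · have h1 : Finset.Ioc a b = Finset.Icc (a+1) b := (Finset.Icc_add_one_left_eq_Ioc a b).symm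
      rw [h1]
      exact hSP (a+1) b (Nat.succ_le_succ (Nat.zero_le a)) hlt
  have hint2 : ∀ a b : ℕ,
      Integrable (fun x => (∑ n ∈ Finset.Ioc a b, ((B n).indicator (fun _ => (1:ℝ)) x - e n))^2) μ :=
    fun a b => (ss_var μ B hBmeas (Finset.Ioc a b)).1
  -- dyadic boundaries
  set c : ℕ → ℕ → ℕ → ℝ := fun k j p => (2:ℝ)^k + (p:ℝ) * 2^(k-j) with hc
  have hc_nonneg : ∀ k j p, 0 ≤ c k j p := by
    intro k j p; rw [hc]; positivity
  have hc_mono : ∀ k j p, c k j p ≤ c k j (p+1) := by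
    intro k j p
    show (2:ℝ)^k + (p:ℝ) * 2^(k-j) ≤ (2:ℝ)^k + ((p+1:ℕ):ℝ) * 2^(k-j)
    have h1 : (0:ℝ) ≤ 2^(k-j) := by positivity
    have h2 : (p:ℝ) ≤ ((p+1:ℕ):ℝ) := by push_cast; linarith
    nlinarith
  have hc_zero : ∀ k j, c k j 0 = (2:ℝ)^k := by intro k j; simp [hc]
  have hc_top : ∀ k j, j ≤ k → c k j (2^j) = (2:ℝ)^(k+1) := by
    intro k j hjk
    show (2:ℝ)^k + ((2^j:ℕ):ℝ) * 2^(k-j) = (2:ℝ)^(k+1)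
    push_cast
    rw [← pow_add]
    rw [Nat.add_sub_cancel' hjk]
    ring
  have hc_even : ∀ k j q, j+1 ≤ k → c k (j+1) (2*q) = c k j q := by
    intro k j q hjk
    show (2:ℝ)^k + ((2*q:ℕ):ℝ) * 2^(k-(j+1)) = (2:ℝ)^k + (q:ℝ) * 2^(k-j)
    have hkj : k - j = (k - (j+1)) + 1 := by omega
    rw [hkj]
    push_cast
    ring
  -- increments
  set D : ℕ → ℕ → ℕ → X → ℝ := fun k j p x =>
    ∑ n ∈ Finset.Ioc (tau (c k j p)) (tau (c k j (p+1))), ((B n).indicator (fun _ => (1:ℝ)) x - e n)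
    with hD
  set Z : ℕ → X → ℝ := fun N x =>
    ∑ n ∈ Finset.Ioc 0 N, ((B n).indicator (fun _ => (1:ℝ)) x - e n) with hZ
  have hZdiff : ∀ a b : ℕ, a ≤ b → ∀ x : X,
      Z b x - Z a x = ∑ n ∈ Finset.Ioc a b, ((B n).indicator (fun _ => (1:ℝ)) x - e n) := by
    intro a b hab x
    show (∑ n ∈ Finset.Ioc 0 b, _) - (∑ n ∈ Finset.Ioc 0 a, _) = _
    rw [← Finset.sum_Ioc_consecutive
      (fun n => ((B n).indicator (fun _ => (1:ℝ)) x - e n)) (Nat.zero_le a) hab]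
    ring
  have hD_eq : ∀ k j p x, D k j p x = Z (tau (c k j (p+1))) x - Z (tau (c k j p)) x := by
    intro k j p x
    rw [hZdiff _ _ (htau_mono _ _ (hc_mono k j p)) x]
  set Q : ℕ → X → ℝ := fun k x =>
    ∑ j ∈ Finset.range (k+1), ∑ p ∈ Finset.range (2^j), (D k j p x)^2 with hQ
  have hQ_nonneg : ∀ k x, 0 ≤ Q k x := by
    intro k x
    exact Finset.sum_nonneg fun j _ => Finset.sum_nonneg fun p _ => sq_nonneg _
  have hQ_int : ∀ k, Integrable (Q k) μ := by
    intro k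
    exact integrable_finset_sum _ fun j _ => integrable_finset_sum _ fun p _ => hint2 _ _
  have hQ_meas : ∀ k, Measurable (Q k) := by
    intro k
    apply Finset.measurable_sum
    intro j _
    apply Finset.measurable_sum
    intro p _
    apply Measurable.pow_const
    apply Finset.measurable_sum
    intro n _
    exact (measurable_const.indicator (hBmeas n)).sub measurable_const
  have hQ_bound : ∀ k, ∫ x, Q k x ∂μ ≤ C * ((k:ℝ)+1) * 2^(k+1) := by
    intro k
    have hsplit : ∫ x, Q k x ∂μ
        = ∑ j ∈ Finset.range (k+1), ∑ p ∈ Finset.range (2^j), ∫ x, (D k j p x)^2 ∂μ := by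
      rw [hQ]
      rw [integral_finset_sum _ fun j _ => integrable_finset_sum _ fun p _ => hint2 _ _]
      exact Finset.sum_congr rfl fun j _ => integral_finset_sum _ fun p _ => hint2 _ _
    rw [hsplit]
    have hlevel : ∀ j ∈ Finset.range (k+1),
        ∑ p ∈ Finset.range (2^j), ∫ x, (D k j p x)^2 ∂μ ≤ C * 2^(k+1) := by
      intro j hj
      have hj' : j ≤ k := by simpa using Nat.lt_succ_iff.mp (Finset.mem_range.mp hj)
      have h1 : ∑ p ∈ Finset.range (2^j), ∫ x, (D k j p x)^2 ∂μ
          ≤ ∑ p ∈ Finset.range (2^j), (C * (E (tau (c k j (p+1))) - E (tau (c k j p)))) := by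
        refine Finset.sum_le_sum fun p _ => ?_
        exact hvar _ _ (htau_mono _ _ (hc_mono k j p))
      refine h1.trans ?_
      have h2 : ∑ p ∈ Finset.range (2^j), (C * (E (tau (c k j (p+1))) - E (tau (c k j p))))
          = C * (E (tau (c k j (2^j))) - E (tau (c k j 0))) := by
        rw [← Finset.mul_sum]
        rw [Finset.sum_range_sub (fun p => E (tau (c k j p)))]
      rw [h2, hc_top k j hj', hc_zero k j]
      have h3 : E (tau ((2:ℝ)^(k+1))) ≤ 2^(k+1) + 1 := htau_ub _ (by positivity)
      have h4 : (2:ℝ)^k ≤ E (tau ((2:ℝ)^k)) := htau_le _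
      have h5 : (1:ℝ) ≤ 2^k := one_le_pow₀ (by norm_num)
      have h6 : (2:ℝ)^(k+1) = 2 * 2^k := by ring
      nlinarith
    calc ∑ j ∈ Finset.range (k+1), ∑ p ∈ Finset.range (2^j), ∫ x, (D k j p x)^2 ∂μ
        ≤ ∑ j ∈ Finset.range (k+1), (C * 2^(k+1)) := Finset.sum_le_sum hlevel
      _ = ((k:ℝ)+1) * (C * 2^(k+1)) := by
          rw [Finset.sum_const, Finset.card_range]; push_cast; ring
      _ = C * ((k:ℝ)+1) * 2^(k+1) := by ring
  -- Chebyshev + Borel-Cantelli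
  set aa : ℕ → ℝ := fun k => (2:ℝ)^(k+1) * ((k:ℝ)+1) ^ ((2:ℝ)+2*ε) with haa
  have haa_pos : ∀ k, 0 < aa k := by
    intro k; rw [haa]; positivity
  set s : ℕ → Set X := fun k => {x | aa k ≤ Q k x} with hs
  have hμs : ∀ k, μ (s k) ≤ ENNReal.ofReal (C * (((k:ℝ)+1) ^ (-(1+2*ε)))) := by
    intro k
    have h1 := mul_meas_ge_le_integral_of_nonneg
      (Eventually.of_forall (hQ_nonneg k)) (hQ_int k) (aa k)
    have h2 : (μ (s k)).toReal ≤ (C * ((k:ℝ)+1) * 2^(k+1)) / aa k := by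
      rw [le_div_iff₀ (haa_pos k)]
      calc (μ (s k)).toReal * aa k = aa k * (μ {x | aa k ≤ Q k x}).toReal := by rw [mul_comm]
        _ ≤ ∫ x, Q k x ∂μ := h1
        _ ≤ C * ((k:ℝ)+1) * 2^(k+1) := hQ_bound k
    have h3 : (C * ((k:ℝ)+1) * 2^(k+1)) / aa k = C * (((k:ℝ)+1) ^ (-(1+2*ε))) := by
      simp only [haa]
      have hk1 : (0:ℝ) < (k:ℝ)+1 := by positivity
      have hsplit : ((k:ℝ)+1) ^ ((2:ℝ)+2*ε) = ((k:ℝ)+1) * ((k:ℝ)+1) ^ ((1:ℝ)+2*ε) := by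
        rw [show (2:ℝ)+2*ε = 1+(1+2*ε) by ring, Real.rpow_add hk1, Real.rpow_one]
      rw [hsplit, Real.rpow_neg (le_of_lt hk1)]
      have hne1 : ((k:ℝ)+1) ≠ 0 := by positivity
      have hne2 : ((k:ℝ)+1) ^ ((1:ℝ)+2*ε) ≠ 0 := by positivity
      have hne3 : ((2:ℝ))^(k+1) ≠ 0 := by positivity
      field_simp
    rw [← h3]
    calc μ (s k) = ENNReal.ofReal ((μ (s k)).toReal) := by
          rw [ENNReal.ofReal_toReal (measure_ne_top μ _)]
      _ ≤ ENNReal.ofReal ((C * ((k:ℝ)+1) * 2^(k+1)) / aa k) := ENNReal.ofReal_le_ofReal h2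
  have hsummable : Summable (fun k : ℕ => C * (((k:ℝ)+1) ^ (-(1+2*ε)))) := by
    apply Summable.mul_left
    have hbase : Summable (fun n : ℕ => (n:ℝ) ^ (-(1+2*ε))) :=
      Real.summable_nat_rpow.2 (by linarith)
    have := (summable_nat_add_iff 1).2 hbase
    refine this.congr fun n => ?_
    push_cast
    ring_nf
  have htsum : (∑' k, μ (s k)) ≠ ⊤ := by
    have h1 : (∑' k, μ (s k)) ≤ ∑' k : ℕ, ENNReal.ofReal (C * (((k:ℝ)+1) ^ (-(1+2*ε)))) :=
      ENNReal.tsum_le_tsum hμs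
    have h2 : (∑' k : ℕ, ENNReal.ofReal (C * (((k:ℝ)+1) ^ (-(1+2*ε)))))
        = ENNReal.ofReal (∑' k : ℕ, C * (((k:ℝ)+1) ^ (-(1+2*ε)))) := by
      rw [ENNReal.ofReal_tsum_of_nonneg (fun k => by positivity) hsummable]
    exact ne_top_of_le_ne_top (by rw [h2]; exact ENNReal.ofReal_ne_top) h1
  have hae := MeasureTheory.ae_eventually_notMem htsum
  filter_upwards [hae] with x hx
  obtain ⟨k₀, hk₀⟩ := eventually_atTop.mp hx
  have hQlt : ∀ k, k₀ ≤ k → Q k x < aa k := by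
    intro k hk
    have := hk₀ k hk
    rw [hs] at this
    simpa using not_le.mp (by simpa using this)
  set Mx : ℕ → ℕ → ℝ := fun k l => (∑ p ∈ Finset.range (2^l), (D k l p x)^2) ^ ((1:ℝ)/2) with hMx
  have hMx_nonneg : ∀ k l, 0 ≤ Mx k l := by
    intro k l
    exact Real.rpow_nonneg (Finset.sum_nonneg fun p _ => sq_nonneg _) _
  have habs_rpow : ∀ d : ℝ, |d| = (d^2) ^ ((1:ℝ)/2) := by
    intro d
    rw [← sq_abs d, ← Real.rpow_natCast |d| 2, ← Real.rpow_mul (abs_nonneg d)]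
    norm_num
  have hD_le_Mx : ∀ k l p, p < 2^l → |D k l p x| ≤ Mx k l := by
    intro k l p hp
    rw [habs_rpow (D k l p x), hMx]
    refine Real.rpow_le_rpow (sq_nonneg _) ?_ (by norm_num)
    exact Finset.single_le_sum (fun q _ => sq_nonneg (D k l q x))
      (Finset.mem_range.mpr hp)
  have hMx_sq : ∀ k l, (Mx k l)^2 = ∑ p ∈ Finset.range (2^l), (D k l p x)^2 := by
    intro k l
    rw [hMx]
    rw [← Real.rpow_natCast ((∑ p ∈ Finset.range (2^l), (D k l p x)^2) ^ ((1:ℝ)/2)) 2,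
      ← Real.rpow_mul (Finset.sum_nonneg fun p _ => sq_nonneg _)]
    norm_num
  have hMxsum : ∀ k, ∑ l ∈ Finset.range (k+1), Mx k l ≤ (((k:ℝ)+1) * Q k x) ^ ((1:ℝ)/2) := by
    intro k
    have hnn : 0 ≤ ∑ l ∈ Finset.range (k+1), Mx k l :=
      Finset.sum_nonneg fun l _ => hMx_nonneg k l
    have hcs : (∑ l ∈ Finset.range (k+1), Mx k l)^2 ≤ ((k:ℝ)+1) * Q k x := by
      have := Finset.sum_mul_sq_le_sq_mul_sq (Finset.range (k+1)) (fun _ => (1:ℝ)) (Mx k)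
      simp only [one_mul, one_pow] at this
      calc (∑ l ∈ Finset.range (k+1), Mx k l)^2
          ≤ (∑ _l ∈ Finset.range (k+1), (1:ℝ)) * ∑ l ∈ Finset.range (k+1), (Mx k l)^2 := this
        _ = ((k:ℝ)+1) * Q k x := by
            rw [Finset.sum_const, Finset.card_range, hQ]
            congr 1
            · push_cast; ring
            · exact Finset.sum_congr rfl fun l _ => hMx_sq k l
    calc ∑ l ∈ Finset.range (k+1), Mx k l
        = ((∑ l ∈ Finset.range (k+1), Mx k l)^2) ^ ((1:ℝ)/2) := by
          rw [← habs_rpow]; exact (abs_of_nonneg hnn).symm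
      _ ≤ (((k:ℝ)+1) * Q k x) ^ ((1:ℝ)/2) :=
          Real.rpow_le_rpow (sq_nonneg _) hcs (by norm_num)
  -- chaining along dyadic points
  have hchain : ∀ k j, j ≤ k → ∀ p, p ≤ 2^j →
      |Z (tau (c k j p)) x - Z (tau ((2:ℝ)^k)) x| ≤ ∑ l ∈ Finset.range (j+1), Mx k l := by
    intro k j
    induction j with
    | zero =>
        intro _ p hp
        interval_cases p
        · rw [hc_zero k 0]
          simp [hMx_nonneg k 0]
        · have h1 : Z (tau (c k 0 1)) x - Z (tau ((2:ℝ)^k)) x = D k 0 0 x := by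
            rw [hD_eq k 0 0 x, hc_zero k 0]
          rw [h1]
          simpa using hD_le_Mx k 0 0 (by norm_num)
    | succ j IH =>
        intro hjk p hp
        have hjk' : j ≤ k := by omega
        rcases Nat.even_or_odd p with ⟨q, hq⟩ | ⟨q, hq⟩
        · -- p = 2q
          have hq2 : p = 2*q := by omega
          have hqle : q ≤ 2^j := by
            have : 2^(j+1) = 2 * 2^j := by ring
            omega
          rw [hq2, hc_even k j q hjk]
          refine (IH hjk' q hqle).trans ?_
          refine Finset.sum_le_sum_of_subset_of_nonneg ?_ fun l _ _ => hMx_nonneg k l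
          exact Finset.range_subset_range.mpr (by omega)
        · -- p = 2q+1
          have hqlt : q < 2^j := by
            have : 2^(j+1) = 2 * 2^j := by ring
            omega
          have h2q : 2*q + 1 = (2*q) + 1 := rfl
          have hfirst : |Z (tau (c k (j+1) (2*q+1))) x - Z (tau (c k (j+1) (2*q))) x|
              ≤ Mx k (j+1) := by
            rw [← hD_eq k (j+1) (2*q) x]
            exact hD_le_Mx k (j+1) (2*q) (by
              have : 2^(j+1) = 2 * 2^j := by ring
              omega)
          have hsecond : |Z (tau (c k (j+1) (2*q))) x - Z (tau ((2:ℝ)^k)) x|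
              ≤ ∑ l ∈ Finset.range (j+1), Mx k l := by
            rw [hc_even k j q hjk]
            exact IH hjk' q (le_of_lt hqlt)
          rw [hq]
          rw [Finset.sum_range_succ]
          calc |Z (tau (c k (j+1) (2*q+1))) x - Z (tau ((2:ℝ)^k)) x|
              ≤ |Z (tau (c k (j+1) (2*q+1))) x - Z (tau (c k (j+1) (2*q))) x|
                + |Z (tau (c k (j+1) (2*q))) x - Z (tau ((2:ℝ)^k)) x| := abs_sub_le _ _ _
            _ ≤ Mx k (j+1) + ∑ l ∈ Finset.range (j+1), Mx k l := add_le_add hfirst hsecond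
            _ = ∑ l ∈ Finset.range (j+1), Mx k l + Mx k (j+1) := by ring
  -- block estimate
  have hblock : ∀ (k N : ℕ), tau ((2:ℝ)^k) ≤ N → N ≤ tau ((2:ℝ)^(k+1)) →
      |Z N x - Z (tau ((2:ℝ)^k)) x| ≤ 2 * ((((k:ℝ)+1) * Q k x) ^ ((1:ℝ)/2)) + 2 := by
    intro k N h1 h2
    have hMxS_nonneg : 0 ≤ ∑ l ∈ Finset.range (k+1), Mx k l :=
      Finset.sum_nonneg fun l _ => hMx_nonneg k l
    have hMxQ := hMxsum k
    set P : ℕ → Prop := fun p => tau (c k k p) ≤ N with hP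
    have hP0 : P 0 := by
      show tau (c k k 0) ≤ N
      rw [hc_zero k k]; exact h1
    set p : ℕ := Nat.findGreatest P (2^k) with hpdef
    have hpP : P p := Nat.findGreatest_spec (Nat.zero_le _) hP0
    have hple : p ≤ 2^k := Nat.findGreatest_le _
    have hA : |Z (tau (c k k p)) x - Z (tau ((2:ℝ)^k)) x| ≤ ∑ l ∈ Finset.range (k+1), Mx k l :=
      hchain k k le_rfl p hple
    rcases eq_or_lt_of_le hple with heq | hlt
    · -- p = 2^k, so N = tau (2^(k+1))
      have htop : tau ((2:ℝ)^(k+1)) ≤ N := by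
        have := hpP
        rw [hP] at this
        rw [heq] at this
        rwa [hc_top k k le_rfl] at this
      have hNeq : N = tau ((2:ℝ)^(k+1)) := le_antisymm h2 htop
      have : |Z N x - Z (tau ((2:ℝ)^k)) x| ≤ ∑ l ∈ Finset.range (k+1), Mx k l := by
        rw [hNeq, ← hc_top k k le_rfl, ← heq]
        exact hA
      linarith
    · -- p < 2^k
      have hnP : ¬ P (p+1) := Nat.findGreatest_is_greatest (n := 2^k) (by omega) (by omega)
      have hNb : N < tau (c k k (p+1)) := by
        rw [hP] at hnP
        exact not_le.mp hnP
      have hab : tau (c k k p) ≤ tau (c k k (p+1)) := htau_mono _ _ (hc_mono k k p)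
      have haN : tau (c k k p) ≤ N := hpP
      have hNb' : N ≤ tau (c k k (p+1)) := le_of_lt hNb
      have hcc : c k k (p+1) = c k k p + 1 := by
        show (2:ℝ)^k + ((p+1:ℕ):ℝ) * 2^(k-k) = ((2:ℝ)^k + (p:ℝ) * 2^(k-k)) + 1
        rw [Nat.sub_self]
        push_cast
        ring
      have hEb : E (tau (c k k (p+1))) ≤ c k k p + 2 := by
        have h := htau_ub (c k k (p+1)) (hc_nonneg k k (p+1))
        linarith [hcc]
      have hEa : c k k p ≤ E (tau (c k k p)) := htau_le _
      -- decompose Z N - Z a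
      set a := tau (c k k p)
      set b := tau (c k k (p+1))
      have hZNa : Z N x - Z a x
          = (∑ n ∈ Finset.Ioc a N, (B n).indicator (fun _ => (1:ℝ)) x) - (E N - E a) := by
        rw [hZdiff a N haN x, hEdiff a N haN, Finset.sum_sub_distrib]
      have hZba : Z b x - Z a x
          = (∑ n ∈ Finset.Ioc a b, (B n).indicator (fun _ => (1:ℝ)) x) - (E b - E a) := by
        rw [hZdiff a b hab x, hEdiff a b hab, Finset.sum_sub_distrib]
      have hind_nonneg : ∀ (S : Finset ℕ), 0 ≤ ∑ n ∈ S, (B n).indicator (fun _ => (1:ℝ)) x :=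
        fun S => Finset.sum_nonneg fun n _ => Set.indicator_nonneg (fun _ _ => zero_le_one) x
      have hind_mono : (∑ n ∈ Finset.Ioc a N, (B n).indicator (fun _ => (1:ℝ)) x)
          ≤ ∑ n ∈ Finset.Ioc a b, (B n).indicator (fun _ => (1:ℝ)) x := by
        refine Finset.sum_le_sum_of_subset_of_nonneg (Finset.Ioc_subset_Ioc le_rfl hNb') ?_
        exact fun n _ _ => Set.indicator_nonneg (fun _ _ => zero_le_one) x
      have hENa1 : 0 ≤ E N - E a := by
        have := hEmono haN; linarith
      have hENa2 : E N - E a ≤ 2 := by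
        have := hEmono hNb'
        linarith
      have hDb : Z b x - Z a x = D k k p x := (hD_eq k k p x).symm
      have hDle : |D k k p x| ≤ Mx k k := hD_le_Mx k k p hlt
      have hMxkk : Mx k k ≤ ∑ l ∈ Finset.range (k+1), Mx k l :=
        Finset.single_le_sum (fun l _ => hMx_nonneg k l) (Finset.self_mem_range_succ k)
      have hup : Z N x - Z a x ≤ Mx k k + 2 := by
        have hEba : E b - E a ≤ 2 := by linarith
        have h5 : (∑ n ∈ Finset.Ioc a b, (B n).indicator (fun _ => (1:ℝ)) x)
            = D k k p x + (E b - E a) := by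
          rw [← hDb]; linarith [hZba]
        have h6 : Z N x - Z a x ≤ D k k p x + (E b - E a) := by
          rw [hZNa, ← h5]
          linarith
        have h7 : D k k p x ≤ |D k k p x| := le_abs_self _
        linarith
      have hlow : -(Mx k k + 2) ≤ Z N x - Z a x := by
        have : -(E N - E a) ≤ Z N x - Z a x := by
          rw [hZNa]
          have := hind_nonneg (Finset.Ioc a N)
          linarith
        have : -(2:ℝ) ≤ Z N x - Z a x := by linarith
        have hMxk0 : 0 ≤ Mx k k := hMx_nonneg k k
        linarith
      have habs : |Z N x - Z a x| ≤ Mx k k + 2 := abs_le.mpr ⟨hlow, hup⟩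
      calc |Z N x - Z (tau ((2:ℝ)^k)) x|
          ≤ |Z N x - Z a x| + |Z a x - Z (tau ((2:ℝ)^k)) x| := abs_sub_le _ _ _
        _ ≤ (Mx k k + 2) + ∑ l ∈ Finset.range (k+1), Mx k l := add_le_add habs hA
        _ ≤ 2 * (∑ l ∈ Finset.range (k+1), Mx k l) + 2 := by linarith
        _ ≤ 2 * ((((k:ℝ)+1) * Q k x) ^ ((1:ℝ)/2)) + 2 := by linarith
  -- per-block weights
  set W : ℕ → ℝ := fun i => 2 * ((((i:ℝ)+1) * Q i x) ^ ((1:ℝ)/2)) + 2 with hW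
  have hW_nonneg : ∀ i, 0 ≤ W i := by
    intro i
    have h0 : 0 ≤ (((i:ℝ)+1) * Q i x) ^ ((1:ℝ)/2) :=
      Real.rpow_nonneg (mul_nonneg (by positivity) (hQ_nonneg i x)) _
    simp only [hW]
    linarith
  have htel : ∀ k : ℕ, 1 ≤ k →
      |Z (tau ((2:ℝ)^k)) x - Z (tau ((2:ℝ)^1)) x| ≤ ∑ i ∈ Finset.Ico 1 k, W i := by
    intro k hk
    induction k, hk using Nat.le_induction with
    | base => simp
    | succ k hk IH =>
        have hmono : tau ((2:ℝ)^k) ≤ tau ((2:ℝ)^(k+1)) :=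
          htau_mono _ _ (pow_le_pow_right₀ (by norm_num) (by omega))
        have hb := hblock k (tau ((2:ℝ)^(k+1))) hmono le_rfl
        have hb' : |Z (tau ((2:ℝ)^(k+1))) x - Z (tau ((2:ℝ)^k)) x| ≤ W k := hb
        rw [Finset.sum_Ico_succ_top hk]
        calc |Z (tau ((2:ℝ)^(k+1))) x - Z (tau ((2:ℝ)^1)) x|
            ≤ |Z (tau ((2:ℝ)^(k+1))) x - Z (tau ((2:ℝ)^k)) x|
              + |Z (tau ((2:ℝ)^k)) x - Z (tau ((2:ℝ)^1)) x| := abs_sub_le _ _ _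
          _ ≤ W k + ∑ i ∈ Finset.Ico 1 k, W i := add_le_add hb' IH
          _ = ∑ i ∈ Finset.Ico 1 k, W i + W k := by ring
  -- geometric quantities
  set r : ℝ := (2:ℝ) ^ ((1:ℝ)/2) with hr
  have hr_pos : 0 < r := Real.rpow_pos_of_pos (by norm_num) _
  have hr_sq : r^2 = 2 := by
    rw [hr, ← Real.rpow_natCast ((2:ℝ) ^ ((1:ℝ)/2)) 2, ← Real.rpow_mul (by norm_num : (0:ℝ) ≤ 2)]
    norm_num
  have hr_le : r ≤ 3/2 := by nlinarith [hr_pos.le]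
  have hr_ge : (5:ℝ)/4 ≤ r := by nlinarith [hr_pos.le]
  set G : ℕ → ℝ := fun i => ((2:ℝ)^i) ^ ((1:ℝ)/2) with hG
  have hG_eq : ∀ i, G i = r ^ i := by
    intro i
    show ((2:ℝ)^i) ^ ((1:ℝ)/2) = r ^ i
    rw [hr]
    rw [← Real.rpow_natCast (2:ℝ) i, ← Real.rpow_natCast ((2:ℝ) ^ ((1:ℝ)/2)) i,
      ← Real.rpow_mul (by norm_num : (0:ℝ) ≤ 2),
      ← Real.rpow_mul (by norm_num : (0:ℝ) ≤ 2)]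
    congr 1
    ring
  have hG_ge1 : ∀ i, 1 ≤ G i := by
    intro i
    exact Real.one_le_rpow (one_le_pow₀ (by norm_num)) (by norm_num)
  have hG_nonneg : ∀ i, 0 ≤ G i := fun i => le_trans zero_le_one (hG_ge1 i)
  have hGsum : ∀ k : ℕ, ∑ i ∈ Finset.Icc 1 k, G i ≤ 6 * G k := by
    intro k
    have hpow_nonneg : ∀ i : ℕ, (0:ℝ) ≤ r ^ i := fun i => pow_nonneg hr_pos.le i
    have h1 : ∑ i ∈ Finset.Icc 1 k, G i ≤ ∑ i ∈ Finset.range (k+1), r ^ i := by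
      have heq : ∑ i ∈ Finset.Icc 1 k, G i = ∑ i ∈ Finset.Icc 1 k, r ^ i :=
        Finset.sum_congr rfl fun i _ => hG_eq i
      rw [heq]
      refine Finset.sum_le_sum_of_subset_of_nonneg ?_ fun i _ _ => hpow_nonneg i
      intro i hi
      simp only [Finset.mem_Icc] at hi
      simp only [Finset.mem_range]
      omega
    have hrne : r ≠ 1 := by
      intro h
      rw [h] at hr_ge
      norm_num at hr_ge
    have h2 : ∑ i ∈ Finset.range (k+1), r ^ i = (r^(k+1) - 1)/(r-1) :=
      geom_sum_eq hrne (k+1)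
    have hrk : (0:ℝ) ≤ r ^ k := pow_nonneg hr_pos.le k
    have h3 : (r^(k+1) - 1)/(r-1) ≤ 6 * r ^ k := by
      rw [div_le_iff₀ (by linarith [hr_ge] : (0:ℝ) < r - 1)]
      have hrk1 : r^(k+1) = r * r^k := by ring
      nlinarith [mul_nonneg (show (0:ℝ) ≤ 5*r-6 by linarith [hr_ge]) hrk, hrk1]
    rw [hG_eq k]
    linarith [h1, h2.le, h3, h2.ge]
  set L : ℕ → ℝ := fun i => ((i:ℝ)+1) ^ ((3:ℝ)/2 + ε) with hL
  have hL_ge1 : ∀ i, 1 ≤ L i := by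
    intro i
    refine Real.one_le_rpow ?_ (by linarith)
    have := Nat.cast_nonneg (α := ℝ) i
    linarith
  have hL_nonneg : ∀ i, 0 ≤ L i := fun i => le_trans zero_le_one (hL_ge1 i)
  have hL_mono : ∀ i k : ℕ, i ≤ k → L i ≤ L k := by
    intro i k hik
    refine Real.rpow_le_rpow (by positivity) ?_ (by linarith)
    have : (i:ℝ) ≤ (k:ℝ) := by exact_mod_cast hik
    linarith
  have hWbig : ∀ i, k₀ ≤ i → W i ≤ 5 * (G i * L i) := by
    intro i hi
    have hQa : Q i x < aa i := hQlt i hi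
    have hQ0 : 0 ≤ Q i x := hQ_nonneg i x
    have hipos : (0:ℝ) < (i:ℝ)+1 := by positivity
    have hstep1 : (((i:ℝ)+1) * Q i x) ≤ ((i:ℝ)+1) * aa i := by nlinarith
    have hprod : ((i:ℝ)+1) * aa i = 2^(i+1) * ((i:ℝ)+1) ^ ((3:ℝ)+2*ε) := by
      have h5 : ((i:ℝ)+1) ^ ((3:ℝ)+2*ε) = ((i:ℝ)+1) * ((i:ℝ)+1) ^ ((2:ℝ)+2*ε) := by
        rw [show (3:ℝ)+2*ε = 1+(2+2*ε) by ring, Real.rpow_add hipos, Real.rpow_one]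
      show ((i:ℝ)+1) * ((2:ℝ)^(i+1) * ((i:ℝ)+1) ^ ((2:ℝ)+2*ε)) = _
      rw [h5]
      ring
    have hW1 : (((i:ℝ)+1) * Q i x) ^ ((1:ℝ)/2)
        ≤ (2^(i+1) * ((i:ℝ)+1) ^ ((3:ℝ)+2*ε)) ^ ((1:ℝ)/2) := by
      refine Real.rpow_le_rpow (mul_nonneg hipos.le hQ0) ?_ (by norm_num)
      rw [← hprod]; exact hstep1
    have hsplit : (2^(i+1) * ((i:ℝ)+1) ^ ((3:ℝ)+2*ε)) ^ ((1:ℝ)/2)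
        = G (i+1) * L i := by
      rw [Real.mul_rpow (by positivity) (Real.rpow_nonneg hipos.le _)]
      congr 1
      show _ = ((i:ℝ)+1) ^ ((3:ℝ)/2 + ε)
      rw [← Real.rpow_mul hipos.le]
      congr 1
      ring
    have hG1 : G (i+1) = r * G i := by rw [hG_eq, hG_eq, pow_succ]; ring
    have hGL1 : 1 ≤ G i * L i := by nlinarith [hG_ge1 i, hL_ge1 i]
    have hkey : (((i:ℝ)+1) * Q i x) ^ ((1:ℝ)/2) ≤ r * G i * L i := by
      have := hW1
      rw [hsplit, hG1] at this
      linarith [this]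
    have h0 : 0 ≤ (((i:ℝ)+1) * Q i x) ^ ((1:ℝ)/2) :=
      Real.rpow_nonneg (mul_nonneg hipos.le hQ0) _
    show 2 * ((((i:ℝ)+1) * Q i x) ^ ((1:ℝ)/2)) + 2 ≤ 5 * (G i * L i)
    nlinarith [hG_ge1 i, hL_ge1 i, hG_nonneg i, hL_nonneg i]
  set c₃ : ℝ := ∑ i ∈ Finset.Icc 1 k₀, W i with hc₃def
  have hc₃ : 0 ≤ c₃ := Finset.sum_nonneg fun i _ => hW_nonneg i
  have hWall : ∀ i, 1 ≤ i → W i ≤ c₃ + 5 * (G i * L i) := by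
    intro i hi
    rcases le_or_gt i k₀ with h | h
    · have h1 : W i ≤ c₃ :=
        Finset.single_le_sum (fun j _ => hW_nonneg j) (Finset.mem_Icc.mpr ⟨hi, h⟩)
      nlinarith [hG_ge1 i, hL_ge1 i]
    · have h1 := hWbig i h.le
      linarith
  have hWsum : ∀ k : ℕ, 1 ≤ k →
      ∑ i ∈ Finset.Icc 1 k, W i ≤ (k:ℝ) * c₃ + 30 * (G k * L k) := by
    intro k hk
    have h1 : ∑ i ∈ Finset.Icc 1 k, W i ≤ ∑ i ∈ Finset.Icc 1 k, (c₃ + 5 * (G i * L i)) := by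
      refine Finset.sum_le_sum fun i hi => ?_
      exact hWall i (Finset.mem_Icc.mp hi).1
    have h2 : ∑ i ∈ Finset.Icc 1 k, (c₃ + 5 * (G i * L i))
        = (k:ℝ) * c₃ + 5 * ∑ i ∈ Finset.Icc 1 k, G i * L i := by
      rw [Finset.sum_add_distrib, Finset.sum_const, Nat.card_Icc, ← Finset.mul_sum,
        nsmul_eq_mul]
      simp [Nat.add_sub_cancel]
    have h3 : ∑ i ∈ Finset.Icc 1 k, G i * L i ≤ L k * ∑ i ∈ Finset.Icc 1 k, G i := by
      rw [Finset.mul_sum]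
      refine Finset.sum_le_sum fun i hi => ?_
      have := hL_mono i k (Finset.mem_Icc.mp hi).2
      nlinarith [hG_nonneg i, hL_nonneg i]
    have h4 := hGsum k
    have h5 : L k * ∑ i ∈ Finset.Icc 1 k, G i ≤ L k * (6 * G k) :=
      mul_le_mul_of_nonneg_left h4 (hL_nonneg k)
    nlinarith
  -- final constant
  set K₄ : ℝ := |Z (tau ((2:ℝ)^1)) x| + c₃ + 31 with hK₄
  have hK₄pos : 0 < K₄ := by
    have := abs_nonneg (Z (tau ((2:ℝ)^1)) x)
    simp only [hK₄]; linarith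
  have hlog2pos : 0 < Real.log 2 := Real.log_pos (by norm_num)
  refine ⟨K₄ * (2/Real.log 2) ^ ((3:ℝ)/2+ε), ?_, ?_⟩
  · exact mul_pos hK₄pos (Real.rpow_pos_of_pos (by positivity) _)
  intro N hEN
  rw [hIccIoc N] at hEN ⊢
  have hgoalE : (∑ n ∈ Finset.Ioc 0 N, (μ (B n)).toReal) = E N := rfl
  rw [hgoalE] at hEN ⊢
  have hENpos : (0:ℝ) < E N := by linarith
  set nn : ℕ := ⌊E N⌋₊ with hnn
  have hn2 : 2 ≤ nn := Nat.le_floor (by exact_mod_cast hEN)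
  set k : ℕ := Nat.log 2 nn with hkdef
  have hk1 : 1 ≤ k := Nat.log_pos (by norm_num) hn2
  have hge : ((2:ℝ))^k ≤ E N := by
    have h1 : (2:ℕ)^k ≤ nn := Nat.pow_log_le_self 2 (by omega)
    have h2 : (nn:ℝ) ≤ E N := Nat.floor_le hENpos.le
    calc ((2:ℝ))^k = ((2^k : ℕ):ℝ) := by push_cast; ring
      _ ≤ (nn:ℝ) := by exact_mod_cast h1
      _ ≤ E N := h2
  have hlt : E N < ((2:ℝ))^(k+1) := by
    have h1 : nn < 2^(k+1) := Nat.lt_pow_succ_log_self (by norm_num) nn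
    have h2 : E N < (nn:ℝ) + 1 := Nat.lt_floor_add_one _
    have h3 : ((nn:ℝ)) + 1 ≤ ((2:ℝ))^(k+1) := by
      have : nn + 1 ≤ 2^(k+1) := h1
      exact_mod_cast this
    linarith
  have hmkN : tau ((2:ℝ)^k) ≤ N := (htau_iff _ _).2 hge
  have hNmk : N ≤ tau ((2:ℝ)^(k+1)) := by
    by_contra h
    push_neg at h
    have := (htau_iff ((2:ℝ)^(k+1)) N).1 h.le
    linarith
  have hb : |Z N x - Z (tau ((2:ℝ)^k)) x| ≤ W k := hblock k N hmkN hNmk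
  have ht := htel k hk1
  have hsumsplit : ∑ i ∈ Finset.Icc 1 k, W i = ∑ i ∈ Finset.Ico 1 k, W i + W k := by
    rw [← Finset.Ico_add_one_right_eq_Icc, Finset.sum_Ico_succ_top hk1]
  have hZbound : |Z N x| ≤ |Z (tau ((2:ℝ)^1)) x| + ∑ i ∈ Finset.Icc 1 k, W i := by
    have h1 : |Z N x| ≤ |Z N x - Z (tau ((2:ℝ)^k)) x|
        + |Z (tau ((2:ℝ)^k)) x - Z (tau ((2:ℝ)^1)) x| + |Z (tau ((2:ℝ)^1)) x| := by
      have e1 : Z N x = (Z N x - Z (tau ((2:ℝ)^k)) x)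
          + ((Z (tau ((2:ℝ)^k)) x - Z (tau ((2:ℝ)^1)) x) + Z (tau ((2:ℝ)^1)) x) := by ring
      calc |Z N x| = |(Z N x - Z (tau ((2:ℝ)^k)) x)
          + ((Z (tau ((2:ℝ)^k)) x - Z (tau ((2:ℝ)^1)) x) + Z (tau ((2:ℝ)^1)) x)| := by rw [← e1]
        _ ≤ |Z N x - Z (tau ((2:ℝ)^k)) x|
            + |(Z (tau ((2:ℝ)^k)) x - Z (tau ((2:ℝ)^1)) x) + Z (tau ((2:ℝ)^1)) x| :=
              abs_add_le _ _
        _ ≤ |Z N x - Z (tau ((2:ℝ)^k)) x|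
            + (|Z (tau ((2:ℝ)^k)) x - Z (tau ((2:ℝ)^1)) x| + |Z (tau ((2:ℝ)^1)) x|) := by
              have := abs_add_le (Z (tau ((2:ℝ)^k)) x - Z (tau ((2:ℝ)^1)) x) (Z (tau ((2:ℝ)^1)) x)
              linarith
        _ = _ := by ring
    rw [hsumsplit]
    linarith
  have hWk := hWsum k hk1
  have hGL_ge1 : (1:ℝ) ≤ G k * L k := by nlinarith [hG_ge1 k, hL_ge1 k]
  have hkL : (k:ℝ) ≤ L k := by
    have h1 : ((k:ℝ)+1) ^ (1:ℝ) ≤ ((k:ℝ)+1) ^ ((3:ℝ)/2+ε) := by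
      refine Real.rpow_le_rpow_of_exponent_le ?_ (by linarith)
      have : (1:ℝ) ≤ (k:ℝ) := by exact_mod_cast hk1
      linarith
    rw [Real.rpow_one] at h1
    simp only [hL]
    linarith
  have hkGL : (k:ℝ) ≤ G k * L k := by nlinarith [hG_ge1 k, hL_nonneg k, hkL]
  have hfinal1 : |Z N x| ≤ K₄ * (G k * L k) := by
    have hp1 : 0 ≤ c₃ * (G k * L k - (k:ℝ)) := mul_nonneg hc₃ (by linarith)
    have hp2 : 0 ≤ |Z (tau ((2:ℝ)^1)) x| * (G k * L k - 1) :=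
      mul_nonneg (abs_nonneg _) (by linarith)
    simp only [hK₄]
    nlinarith [hZbound, hWk]
  -- conversions
  have hGE : G k ≤ (E N) ^ ((1:ℝ)/2) := Real.rpow_le_rpow (by positivity) hge (by norm_num)
  have hlogE : 0 ≤ Real.log (E N) := Real.log_nonneg (by linarith)
  have hkk : (k:ℝ)+1 ≤ (2/Real.log 2) * Real.log (E N) := by
    have h1 : (k:ℝ) * Real.log 2 = Real.log ((2:ℝ)^k) := by rw [Real.log_pow]
    have h2 : Real.log ((2:ℝ)^k) ≤ Real.log (E N) := Real.log_le_log (by positivity) hge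
    have h3 : (k:ℝ)+1 ≤ 2*(k:ℝ) := by
      have : (1:ℝ) ≤ (k:ℝ) := by exact_mod_cast hk1
      linarith
    have h4 : 2*(k:ℝ) = (2/Real.log 2) * ((k:ℝ) * Real.log 2) := by field_simp
    calc (k:ℝ)+1 ≤ 2*(k:ℝ) := h3
      _ = (2/Real.log 2) * ((k:ℝ)*Real.log 2) := h4
      _ ≤ (2/Real.log 2) * Real.log (E N) := by
          refine mul_le_mul_of_nonneg_left ?_ (by positivity)
          rw [h1]; exact h2
  have hLE : L k ≤ (2/Real.log 2) ^ ((3:ℝ)/2+ε) * (Real.log (E N)) ^ ((3:ℝ)/2+ε) := by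
    have h1 : L k ≤ ((2/Real.log 2) * Real.log (E N)) ^ ((3:ℝ)/2+ε) := by
      simp only [hL]
      exact Real.rpow_le_rpow (by positivity) hkk (by linarith)
    rwa [Real.mul_rpow (by positivity) hlogE] at h1
  have hcard : (((Finset.Ioc 0 N).filter (fun n => x ∈ B n)).card : ℝ)
      = ∑ n ∈ Finset.Ioc 0 N, (B n).indicator (fun _ => (1:ℝ)) x := by
    rw [Finset.card_filter]
    push_cast
    refine Finset.sum_congr rfl fun n _ => ?_
    by_cases h : x ∈ B n <;> simp [h]
  have hZN : |(((Finset.Ioc 0 N).filter (fun n => x ∈ B n)).card : ℝ) - E N| = |Z N x| := by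
    rw [hcard]
    congr 1
    show _ = Z N x
    simp only [hZ, hE]
    rw [Finset.sum_sub_distrib]
  rw [hZN]
  have hE12 : 0 ≤ (E N) ^ ((1:ℝ)/2) := Real.rpow_nonneg hENpos.le _
  have hlogq : 0 ≤ (Real.log (E N)) ^ ((3:ℝ)/2+ε) := Real.rpow_nonneg hlogE _
  have hGLle : G k * L k ≤ (E N) ^ ((1:ℝ)/2)
      * ((2/Real.log 2) ^ ((3:ℝ)/2+ε) * (Real.log (E N)) ^ ((3:ℝ)/2+ε)) :=
    mul_le_mul hGE hLE (hL_nonneg k) hE12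
  calc |Z N x| ≤ K₄ * (G k * L k) := hfinal1
    _ ≤ K₄ * ((E N) ^ ((1:ℝ)/2)
        * ((2/Real.log 2) ^ ((3:ℝ)/2+ε) * (Real.log (E N)) ^ ((3:ℝ)/2+ε))) :=
          mul_le_mul_of_nonneg_left hGLle hK₄pos.le
    _ = K₄ * (2/Real.log 2) ^ ((3:ℝ)/2+ε) * (E N) ^ ((1:ℝ)/2)
        * (Real.log (E N)) ^ ((3:ℝ)/2+ε) := by ring
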